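/- Any derivation D ∈ End(ℝ⁴) (ℝ⁴ ≅ Sym³ℝ²) whose flow preserves the twisted cubic cone — precisely, any D such that for every s,t the vector D(t³, t²s, ts², s³) lies in the tangent plane span{(3t², 2ts, s², 0), (0, t², 2ts, 3s²)} — belongs to the image ρ'(gl(2,ℝ)) of the differential of the third symmetric power representation; conversely every element of ρ'(gl(2,ℝ)) has this property. In particular this subalgebra of End(ℝ⁴) is 4-dimensional. -/
import Mathlib


open Matrix

/-- The differential `ρ' : gl(2,ℝ) → End(ℝ⁴)` of the third symmetric power
representation. -/
def rho' (X : Matrix (Fin 2) (Fin 2) ℝ) : Matrix (Fin 4) (Fin 4) ℝ :=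
  let a := X 0 0; let b := X 0 1; let c := X 1 0; let d := X 1 1
  !![3 * a, 3 * b, 0, 0;
     c, 2 * a + d, 2 * b, 0;
     0, 2 * c, a + 2 * d, b;
     0, 0, 3 * c, 3 * d]

/-- A linear map of `ℝ⁴` infinitesimally preserves the twisted cubic cone (maps each of
its points into the tangent plane at that point) iff it lies in the image of `ρ'`;
moreover `ρ'` is injective, so this subalgebra is 4-dimensional. -/
theorem infinitesimal_automorphisms_of_twisted_cubic :
    (∀ D : Matrix (Fin 4) (Fin 4) ℝ,
      (∀ t s : ℝ, ∃ u v : ℝ,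
        D.mulVec ![t ^ 3, t ^ 2 * s, t * s ^ 2, s ^ 3] =
          u • ![3 * t ^ 2, 2 * t * s, s ^ 2, 0] + v • ![0, t ^ 2, 2 * t * s, 3 * s ^ 2]) ↔
      ∃ X : Matrix (Fin 2) (Fin 2) ℝ, D = rho' X) ∧
    Function.Injective rho' := by
  refine ⟨fun D => ⟨fun h => ?_, ?_⟩, ?_⟩
  · obtain ⟨u1, v1, h1⟩ := h 1 0
    obtain ⟨u2, v2, h2⟩ := h 0 1
    obtain ⟨u3, v3, h3⟩ := h 1 1
    obtain ⟨u4, v4, h4⟩ := h 1 (-1)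
    obtain ⟨u5, v5, h5⟩ := h 2 1
    obtain ⟨u6, v6, h6⟩ := h 1 2
    have e10 := congrFun h1 0; have e11 := congrFun h1 1
    have e12 := congrFun h1 2; have e13 := congrFun h1 3
    have e20 := congrFun h2 0; have e21 := congrFun h2 1
    have e22 := congrFun h2 2; have e23 := congrFun h2 3
    have e30 := congrFun h3 0; have e31 := congrFun h3 1
    have e32 := congrFun h3 2; have e33 := congrFun h3 3
    have e40 := congrFun h4 0; have e41 := congrFun h4 1
    have e42 := congrFun h4 2; have e43 := congrFun h4 3
    have e50 := congrFun h5 0; have e51 := congrFun h5 1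
    have e52 := congrFun h5 2; have e53 := congrFun h5 3
    have e60 := congrFun h6 0; have e61 := congrFun h6 1
    have e62 := congrFun h6 2; have e63 := congrFun h6 3
    simp only [Matrix.mulVec, dotProduct, Fin.sum_univ_four,
      Matrix.cons_val_zero, Matrix.cons_val_one, Matrix.head_cons,
      Matrix.cons_val_two, Matrix.tail_cons, Matrix.cons_val_three,
      Pi.add_apply, Pi.smul_apply, smul_eq_mul] at e10 e11 e12 e13 e20 e21 e22 e23 e30 e31 e32 e33 e40 e41 e42 e43 e50 e51 e52 e53 e60 e61 e62 e63
    norm_num at e10 e11 e12 e13 e20 e21 e22 e23 e30 e31 e32 e33 e40 e41 e42 e43 e50 e51 e52 e53 e60 e61 e62 e63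
    refine ⟨!![D 0 0 / 3, D 0 1 / 3; D 1 0, D 3 3 / 3], ?_⟩
    ext i j
    fin_cases i <;> fin_cases j <;> simp [rho', Matrix.vecHead, Matrix.vecTail] <;> linarith
  · rintro ⟨X, rfl⟩ t s
    refine ⟨X 0 0 * t + X 0 1 * s, X 1 0 * t + X 1 1 * s, ?_⟩
    funext i
    fin_cases i <;>
      simp [rho', Matrix.mulVec, dotProduct, Fin.sum_univ_four] <;> ring
  · intro X Y h
    have h00 := congrFun (congrFun h 0) 0
    have h01 := congrFun (congrFun h 0) 1
    have h10 := congrFun (congrFun h 1) 0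
    have h33 := congrFun (congrFun h 3) 3
    simp only [rho', Matrix.cons_val_zero, Matrix.cons_val_one, Matrix.head_cons,
      Matrix.cons_val_three, Matrix.cons_val_two, Matrix.tail_cons, Matrix.of_apply,
      Matrix.cons_val', Matrix.empty_val', Matrix.cons_val_fin_one,
      Matrix.head_fin_const] at h00 h01 h10 h33
    ext i j
    fin_cases i <;> fin_cases j <;> simp <;> linarith
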